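/- Consider a path network with 8 nodes v_1,...,v_8 where consecutive nodes are joined by edges of length 1, and let δ = 1.2. Then the minimum δ-cover has exactly 3 points, and there is no optimal δ-cover in which every point is located at a node or at distance exactly δ from some node. -/
import Mathlib


open scoped Classical

/-- An abstract metric graph on a metric space `X`: vertices `V`, edges `E` with
endpoints `src`, `tgt`, positive lengths `len`, and an arc-length parametrization
`param e : [0, len e] → X` of each edge.  The metric of `X` is the shortest-path
metric: distances to a point of an edge from outside its interior are realized
through the edge's endpoints, and every point of `X` lies on some edge. -/
structure MetricGraph (X : Type) [MetricSpace X] where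
  V : Set X
  E : Type
  src : E → X
  tgt : E → X
  len : E → ℝ
  len_pos : ∀ e, 0 < len e
  src_mem : ∀ e, src e ∈ V
  tgt_mem : ∀ e, tgt e ∈ V
  param : E → ℝ → X
  param_src : ∀ e, param e 0 = src e
  param_tgt : ∀ e, param e (len e) = tgt e
  param_injOn : ∀ e, Set.InjOn (param e) (Set.Icc 0 (len e))
  param_dist_le : ∀ e, ∀ q ∈ Set.Icc 0 (len e), ∀ q' ∈ Set.Icc 0 (len e),
      dist (param e q) (param e q') ≤ |q - q'|
  vertex_not_interior : ∀ v ∈ V, ∀ e, v ∉ param e '' Set.Ioo 0 (len e)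
  dist_via_endpoints : ∀ (e : E) (x : X), x ∉ param e '' Set.Ioo 0 (len e) →
      ∀ q ∈ Set.Icc 0 (len e),
      dist x (param e q) = min (dist x (src e) + q) (dist x (tgt e) + (len e - q))
  exists_edge : ∀ x : X, ∃ e, ∃ q ∈ Set.Icc 0 (len e), x = param e q

namespace MetricGraph

variable {X : Type} [MetricSpace X]

/-- The continuum of points of an edge. -/
def edgePoints (G : MetricGraph X) (e : G.E) : Set X :=
  G.param e '' Set.Icc 0 (G.len e)

/-- The interior points of an edge. -/
def edgeInterior (G : MetricGraph X) (e : G.E) : Set X :=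
  G.param e '' Set.Ioo 0 (G.len e)

/-- An edge is incident to a node if the node is one of its endpoints. -/
def Incident (G : MetricGraph X) (v : X) (e : G.E) : Prop :=
  G.src e = v ∨ G.tgt e = v

end MetricGraph

/-- `P` δ-covers the set `S`: every point of `S` is within distance `δ` of `P`. -/
def Covers {X : Type} [MetricSpace X] (δ : ℝ) (P S : Set X) : Prop :=
  ∀ x ∈ S, ∃ p ∈ P, dist x p ≤ δ

/-- on the path `[0,7]` with nodes at integers and `δ = 1.2`,
the minimum δ-cover has exactly 3 points, and no optimal (3-point) δ-cover
consists only of points at nodes or at distance exactly `δ` from a node. -/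
lemma tri_ncard (a b c : ℝ) (hab : a ≠ b) (hac : a ≠ c) (hbc : b ≠ c) :
    ({a, b, c} : Set ℝ).ncard = 3 := by
  rw [Set.ncard_insert_of_notMem (by simp [hab, hac]), Set.ncard_pair hbc]

theorem path_network_fds1_fails :
    let IsCover : Set ℝ → Prop := fun P =>
      P ⊆ Set.Icc 0 7 ∧ ∀ x ∈ Set.Icc (0 : ℝ) 7, ∃ p ∈ P, |x - p| ≤ 1.2
    let Cand : Set ℝ :=
      {x | ∃ k : ℤ, 0 ≤ k ∧ k ≤ 7 ∧ (x = (k : ℝ) ∨ |x - (k : ℝ)| = 1.2)}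
    (∃ P : Set ℝ, P.Finite ∧ IsCover P ∧ P.ncard = 3) ∧
      (∀ P : Set ℝ, P.Finite → IsCover P → 3 ≤ P.ncard) ∧
      ¬∃ P : Set ℝ, P.Finite ∧ IsCover P ∧ P.ncard = 3 ∧ P ⊆ Cand := by
  intro IsCover Cand
  refine ⟨⟨{1.2, 3.5, 5.8}, ?_, ⟨?_, ?_⟩, ?_⟩, ?_, ?_⟩
  · exact (Set.finite_singleton _).insert _ |>.insert _
  · intro p hp
    rcases hp with h | h | h <;> subst h <;> constructor <;> norm_num
  · intro x hx
    rcases hx with ⟨hx0, hx7⟩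
    rcases le_or_gt x 2.4 with h | h
    · exact ⟨1.2, by simp, by rw [abs_le]; constructor <;> linarith⟩
    rcases le_or_gt x 4.7 with h2 | h2
    · exact ⟨3.5, by simp, by rw [abs_le]; constructor <;> linarith⟩
    · exact ⟨5.8, by simp, by rw [abs_le]; constructor <;> linarith⟩
  · exact tri_ncard _ _ _ (by norm_num) (by norm_num) (by norm_num)
  · -- lower bound
    intro P hfin hcov
    obtain ⟨p0, hp0P, hp0⟩ := hcov.2 0 (by norm_num)
    obtain ⟨pm, hpmP, hpm⟩ := hcov.2 3.5 (by norm_num)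
    obtain ⟨p7, hp7P, hp7⟩ := hcov.2 7 (by norm_num)
    rw [abs_le] at hp0 hpm hp7
    have hsub : ({p0, pm, p7} : Set ℝ) ⊆ P := by
      intro y hy; rcases hy with h | h | h <;> subst h <;> assumption
    calc 3 = ({p0, pm, p7} : Set ℝ).ncard :=
          (tri_ncard _ _ _ (by intro h; subst h; linarith [hp0.1, hpm.2]
            ) (by intro h; subst h; linarith [hp0.1, hp7.2]
            ) (by intro h; subst h; linarith [hpm.1, hp7.2])).symm
      _ ≤ P.ncard := Set.ncard_le_ncard hsub hfin
  · -- no candidate cover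
    rintro ⟨P, hfin, hcov, hcard, hPC⟩
    obtain ⟨p0, hp0P, hp0⟩ := hcov.2 0 (by norm_num)
    obtain ⟨pm, hpmP, hpm⟩ := hcov.2 3.5 (by norm_num)
    obtain ⟨p7, hp7P, hp7⟩ := hcov.2 7 (by norm_num)
    rw [abs_le] at hp0 hpm hp7
    have hne1 : p0 ≠ pm := by intro h; subst h; linarith [hp0.1, hpm.2]
    have hne2 : p0 ≠ p7 := by intro h; subst h; linarith [hp0.1, hp7.2]
    have hne3 : pm ≠ p7 := by intro h; subst h; linarith [hpm.1, hp7.2]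
    have hsub : ({p0, pm, p7} : Set ℝ) ⊆ P := by
      intro y hy; rcases hy with h | h | h <;> subst h <;> assumption
    have hPeq : P = ({p0, pm, p7} : Set ℝ) :=
      (Set.eq_of_subset_of_ncard_le hsub
        (by rw [hcard, tri_ncard _ _ _ hne1 hne2 hne3]) hfin).symm
    -- pm is forced into [3.3, 3.7]
    have h45 : 3.3 ≤ pm := by
      obtain ⟨q, hqP, hq⟩ := hcov.2 4.5 (by norm_num)
      rw [hPeq] at hqP
      rw [abs_le] at hq
      rcases hqP with h | h | h <;> subst h
      · linarith [hp0.1, hq.2]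
      · linarith [hq.2]
      · linarith [hp7.1, hq.1]
    have h25 : pm ≤ 3.7 := by
      obtain ⟨q, hqP, hq⟩ := hcov.2 2.5 (by norm_num)
      rw [hPeq] at hqP
      rw [abs_le] at hq
      rcases hqP with h | h | h <;> subst h
      · linarith [hp0.1, hq.1]
      · linarith [hq.1]
      · linarith [hp7.1, hq.2]
    obtain ⟨k, _, _, hk⟩ := hPC hpmP
    have hk1 : (3 : ℝ) < (k : ℝ) → (4 : ℝ) ≤ (k : ℝ) := by
      intro h; have : (3:ℤ) < k := by exact_mod_cast h
      exact_mod_cast this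
    have hk2 : (2 : ℝ) < (k : ℝ) → (3 : ℝ) ≤ (k : ℝ) := by
      intro h; have : (2:ℤ) < k := by exact_mod_cast h
      exact_mod_cast this
    have hk3 : (4 : ℝ) < (k : ℝ) → (5 : ℝ) ≤ (k : ℝ) := by
      intro h; have : (4:ℤ) < k := by exact_mod_cast h
      exact_mod_cast this
    rcases hk with h | h
    · -- pm = k with 3.3 ≤ k ≤ 3.7 : impossible
      rw [h] at h45 h25
      have := hk1 (by linarith)
      linarith
    · rw [abs_eq (by norm_num : (0:ℝ) ≤ 1.2)] at h
      rcases h with h | h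
      · -- pm = k + 1.2, k ∈ [2.1, 2.5]
        have hk' : (2 : ℝ) < (k : ℝ) := by linarith
        have := hk2 hk'
        linarith
      · -- pm = k - 1.2, k ∈ [4.5, 4.9]
        have hk' : (4 : ℝ) < (k : ℝ) := by linarith
        have := hk3 hk'
        linarith
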